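/- Let N be an HPTP linear map on M_d(ℂ) and let U, V ∈ M_d(ℂ) be unitary matrices, with associated unitary channels 𝒰(X) = U X U† and 𝒱(X) = V X V†. Then ν(𝒰 ∘ N ∘ 𝒱) = ν(N), i.e., the physical implementability is invariant under pre- and post-composition with unitary channels. -/

import Mathlib

open scoped Kronecker ComplexOrder
open Matrix

noncomputable section

/-- `id_k ⊗ N` applied blockwise. -/
def idTensor {n m : Type*} (k : Type*)
    (N : Matrix n n ℂ → Matrix m m ℂ)
    (M : Matrix (k × n) (k × n) ℂ) : Matrix (k × m) (k × m) ℂ :=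
  Matrix.of fun p q => N (Matrix.of fun a b => M (p.1, a) (q.1, b)) p.2 q.2

/-- Trace-preserving. -/
def IsTP {n m : Type*} [Fintype n] [Fintype m]
    (N : Matrix n n ℂ → Matrix m m ℂ) : Prop :=
  ∀ X, (N X).trace = X.trace

/-- Hermitian-preserving. -/
def IsHP {n m : Type*} (N : Matrix n n ℂ → Matrix m m ℂ) : Prop :=
  ∀ X, X.IsHermitian → (N X).IsHermitian

/-- Completely positive: for every `k`, `id_k ⊗ N` preserves positive semidefiniteness. -/
def IsCP {n m : Type*} [Fintype n] [Fintype m]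
    (N : Matrix n n ℂ → Matrix m m ℂ) : Prop :=
  ∀ (k : ℕ) (M : Matrix (Fin k × n) (Fin k × n) ℂ),
    M.PosSemidef → (idTensor (Fin k) N M).PosSemidef

/-- Completely positive and trace-preserving (quantum channel). -/
def IsCPTP {n m : Type*} [Fintype n] [Fintype m]
    (N : Matrix n n ℂ → Matrix m m ℂ) : Prop :=
  IsLinearMap ℂ N ∧ IsCP N ∧ IsTP N

/-- Completely positive and trace non-increasing. -/
def IsCPTN {n m : Type*} [Fintype n] [Fintype m]
    (N : Matrix n n ℂ → Matrix m m ℂ) : Prop :=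
  IsLinearMap ℂ N ∧ IsCP N ∧ ∀ X : Matrix n n ℂ, X.PosSemidef → (N X).trace ≤ X.trace

/-- Costs of finite quasiprobability decompositions of `N` into CPTP maps. -/
def decompCosts {n m : Type*} [Fintype n] [Fintype m]
    (N : Matrix n n ℂ → Matrix m m ℂ) : Set ℝ :=
  { c | ∃ (s : ℕ) (η : Fin s → ℝ) (O : Fin s → (Matrix n n ℂ → Matrix m m ℂ)),
      (∀ i, IsCPTP (O i)) ∧ (∀ X, N X = ∑ i, (η i : ℂ) • O i X) ∧ c = ∑ i, |η i| }

/-- The physical implementability `ν(N)`. -/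
noncomputable def nu {n m : Type*} [Fintype n] [Fintype m]
    (N : Matrix n n ℂ → Matrix m m ℂ) : ℝ :=
  Real.logb 2 (sInf (decompCosts N))

/-- The Choi matrix of a linear map. -/
def choiMatrix {n m : Type*} [DecidableEq n]
    (N : Matrix n n ℂ → Matrix m m ℂ) : Matrix (n × m) (n × m) ℂ :=
  Matrix.of fun p q => N (Matrix.single p.1 q.1 1) p.2 q.2

/-- Partial trace over the second tensor factor. -/
def ptraceB {n m : Type*} [Fintype m] (J : Matrix (n × m) (n × m) ℂ) :
    Matrix n n ℂ :=
  Matrix.of fun i j => ∑ a, J (i, a) (j, a)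

/-- The trace norm of a matrix. -/
noncomputable def traceNorm {k : Type*} [Fintype k] [DecidableEq k]
    (X : Matrix k k ℂ) : ℝ :=
  ((let hA := Matrix.posSemidef_conjTranspose_mul_self X
    (hA.1.eigenvectorUnitary : Matrix k k ℂ) * diagonal (fun i => ((Real.sqrt (hA.1.eigenvalues i) : ℝ) : ℂ)) *
      (star hA.1.eigenvectorUnitary : Matrix k k ℂ)).trace).re

/-- Tensor product of two maps. -/
def tensorMap {n₁ n₂ m₂ : Type*} [Fintype n₁] [DecidableEq n₁]
    (M : Matrix n₁ n₁ ℂ → Matrix n₁ n₁ ℂ) (N : Matrix n₂ n₂ ℂ → Matrix m₂ m₂ ℂ)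
    (X : Matrix (n₁ × n₂) (n₁ × n₂) ℂ) : Matrix (n₁ × m₂) (n₁ × m₂) ℂ :=
  ∑ i : n₁, ∑ j : n₁,
    (M (Matrix.single i j 1)) ⊗ₖ (N (Matrix.of fun a b => X (i, a) (j, b)))


namespace NuAux
variable {d k : ℕ}

def blk (M : Matrix (Fin k × Fin d) (Fin k × Fin d) ℂ) (i j : Fin k) :
    Matrix (Fin d) (Fin d) ℂ := Matrix.of fun a b => M (i,a) (j,b)

lemma blk_conj (B : Matrix (Fin d) (Fin d) ℂ)
    (M : Matrix (Fin k × Fin d) (Fin k × Fin d) ℂ) (i j : Fin k) :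
    blk (((1 : Matrix (Fin k) (Fin k) ℂ) ⊗ₖ B) * M * ((1 : Matrix (Fin k) (Fin k) ℂ) ⊗ₖ B)ᴴ) i j
      = B * blk M i j * Bᴴ := by
  ext a b
  simp [blk, Matrix.mul_apply, Matrix.kroneckerMap_apply, Matrix.conjTranspose_apply,
    Matrix.one_apply, Fintype.sum_prod_type, ite_mul, mul_ite,
    apply_ite (starRingEnd ℂ), map_zero, Finset.mul_sum, Finset.sum_mul,
    mul_comm, mul_assoc, mul_left_comm]

lemma conj_apply (A : Matrix (Fin d) (Fin d) ℂ)
    (W : Matrix (Fin k × Fin d) (Fin k × Fin d) ℂ) (p q : Fin k × Fin d) :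
    (((1 : Matrix (Fin k) (Fin k) ℂ) ⊗ₖ A) * W * ((1 : Matrix (Fin k) (Fin k) ℂ) ⊗ₖ A)ᴴ) p q
      = (A * blk W p.1 q.1 * Aᴴ) p.2 q.2 := by
  have := congrFun (congrFun (blk_conj A W p.1 q.1) p.2) q.2
  simpa [blk] using this


variable {d : ℕ}

lemma idTensor_conj {k : ℕ} (N : Matrix (Fin d) (Fin d) ℂ → Matrix (Fin d) (Fin d) ℂ)
    (A B : Matrix (Fin d) (Fin d) ℂ) (M : Matrix (Fin k × Fin d) (Fin k × Fin d) ℂ) :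
    idTensor (Fin k) (fun X => A * N (B * X * Bᴴ) * Aᴴ) M
      = ((1 : Matrix (Fin k) (Fin k) ℂ) ⊗ₖ A) *
          idTensor (Fin k) N (((1 : Matrix (Fin k) (Fin k) ℂ) ⊗ₖ B) * M *
            ((1 : Matrix (Fin k) (Fin k) ℂ) ⊗ₖ B)ᴴ) *
          ((1 : Matrix (Fin k) (Fin k) ℂ) ⊗ₖ A)ᴴ := by
  ext p q
  rw [conj_apply]
  have hblk : blk (idTensor (Fin k) N (((1 : Matrix (Fin k) (Fin k) ℂ) ⊗ₖ B) * M *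
      ((1 : Matrix (Fin k) (Fin k) ℂ) ⊗ₖ B)ᴴ)) p.1 q.1
      = N (B * blk M p.1 q.1 * Bᴴ) := by
    ext a b
    simp only [blk, idTensor, Matrix.of_apply]
    congr 1
    have := blk_conj B M p.1 q.1
    calc (Matrix.of fun a b => (((1 : Matrix (Fin k) (Fin k) ℂ) ⊗ₖ B) * M *
        ((1 : Matrix (Fin k) (Fin k) ℂ) ⊗ₖ B)ᴴ) (p.1, a) (q.1, b))
        = blk (((1 : Matrix (Fin k) (Fin k) ℂ) ⊗ₖ B) * M *
            ((1 : Matrix (Fin k) (Fin k) ℂ) ⊗ₖ B)ᴴ) p.1 q.1 := rfl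
      _ = B * blk M p.1 q.1 * Bᴴ := this
  rw [hblk]
  rfl

lemma kron_one_unitary {k : ℕ} {A : Matrix (Fin d) (Fin d) ℂ}
    (hA : A ∈ Matrix.unitaryGroup (Fin d) ℂ) :
    ((1 : Matrix (Fin k) (Fin k) ℂ) ⊗ₖ A)ᴴ * ((1 : Matrix (Fin k) (Fin k) ℂ) ⊗ₖ A) = 1 := by
  have h1 : Aᴴ * A = 1 := by
    simpa [Matrix.star_eq_conjTranspose] using hA.1
  have hct : ((1 : Matrix (Fin k) (Fin k) ℂ) ⊗ₖ A)ᴴ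
      = (1 : Matrix (Fin k) (Fin k) ℂ) ⊗ₖ Aᴴ := by
    ext p q
    simp [Matrix.conjTranspose_apply, Matrix.kroneckerMap_apply, Matrix.one_apply,
      apply_ite (starRingEnd ℂ), eq_comm, mul_comm]
  rw [hct, ← Matrix.mul_kronecker_mul, Matrix.one_mul, h1, Matrix.one_kronecker_one]

lemma conj_CPTP (U V : Matrix (Fin d) (Fin d) ℂ)
    (hU : U ∈ Matrix.unitaryGroup (Fin d) ℂ) (hV : V ∈ Matrix.unitaryGroup (Fin d) ℂ)
    (O : Matrix (Fin d) (Fin d) ℂ → Matrix (Fin d) (Fin d) ℂ) (hO : IsCPTP O) :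
    IsCPTP (fun X => U * O (V * X * Vᴴ) * Uᴴ) := by
  obtain ⟨hlin, hCP, hTP⟩ := hO
  have hVu : Vᴴ * V = 1 := by simpa [Matrix.star_eq_conjTranspose] using hV.1
  have hUu : Uᴴ * U = 1 := by simpa [Matrix.star_eq_conjTranspose] using hU.1
  refine ⟨⟨?_, ?_⟩, ?_, ?_⟩
  · intro X Y
    simp [Matrix.mul_add, Matrix.add_mul, hlin.map_add]
  · intro c X
    simp [Matrix.mul_smul, Matrix.smul_mul, hlin.map_smul]
  · intro k M hM
    rw [idTensor_conj]
    exact ((hCP k _ (hM.mul_mul_conjTranspose_same _)).mul_mul_conjTranspose_same _)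
  · intro X
    rw [Matrix.trace_mul_cycle, hUu, Matrix.one_mul, hTP,
      Matrix.trace_mul_cycle, hVu, Matrix.one_mul]


variable {d : ℕ}

lemma decompCosts_subset (N : Matrix (Fin d) (Fin d) ℂ → Matrix (Fin d) (Fin d) ℂ)
    (U V : Matrix (Fin d) (Fin d) ℂ)
    (hU : U ∈ Matrix.unitaryGroup (Fin d) ℂ) (hV : V ∈ Matrix.unitaryGroup (Fin d) ℂ) :
    decompCosts N ⊆ decompCosts (fun X => U * N (V * X * Vᴴ) * Uᴴ) := by
  rintro c ⟨s, η, O, hO, hsum, hc⟩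
  refine ⟨s, η, fun i => fun X => U * O i (V * X * Vᴴ) * Uᴴ,
    fun i => conj_CPTP U V hU hV (O i) (hO i), fun X => ?_, hc⟩
  simp only [hsum (V * X * Vᴴ), Matrix.mul_sum, Matrix.sum_mul,
    Matrix.mul_smul, Matrix.smul_mul]

lemma double_conj (N : Matrix (Fin d) (Fin d) ℂ → Matrix (Fin d) (Fin d) ℂ)
    (U V : Matrix (Fin d) (Fin d) ℂ)
    (hU : U ∈ Matrix.unitaryGroup (Fin d) ℂ) (hV : V ∈ Matrix.unitaryGroup (Fin d) ℂ) :
    (fun X => Uᴴ * ((fun Y => U * N (V * Y * Vᴴ) * Uᴴ) (Vᴴ * X * Vᴴᴴ)) * Uᴴᴴ) = N := by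
  have hUu : Uᴴ * U = 1 := by simpa [Matrix.star_eq_conjTranspose] using hU.1
  have hUu' : U * Uᴴ = 1 := by simpa [Matrix.star_eq_conjTranspose] using hU.2
  have hVu' : V * Vᴴ = 1 := by simpa [Matrix.star_eq_conjTranspose] using hV.2
  funext X
  simp only [Matrix.conjTranspose_conjTranspose]
  have h1 : V * (Vᴴ * X * V) * Vᴴ = X := by
    calc V * (Vᴴ * X * V) * Vᴴ = (V * Vᴴ) * X * (V * Vᴴ) := by
          simp only [Matrix.mul_assoc]
      _ = X := by rw [hVu']; simp
  rw [h1]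
  calc Uᴴ * (U * N X * Uᴴ) * U = (Uᴴ * U) * N X * (Uᴴ * U) := by
        simp only [Matrix.mul_assoc]
    _ = N X := by rw [hUu]; simp

lemma decompCosts_conj_eq (N : Matrix (Fin d) (Fin d) ℂ → Matrix (Fin d) (Fin d) ℂ)
    (U V : Matrix (Fin d) (Fin d) ℂ)
    (hU : U ∈ Matrix.unitaryGroup (Fin d) ℂ) (hV : V ∈ Matrix.unitaryGroup (Fin d) ℂ) :
    decompCosts (fun X => U * N (V * X * Vᴴ) * Uᴴ) = decompCosts N := by
  refine le_antisymm ?_ (decompCosts_subset N U V hU hV)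
  have hU' : Uᴴ ∈ Matrix.unitaryGroup (Fin d) ℂ := by
    rw [Matrix.mem_unitaryGroup_iff]
    simpa [Matrix.star_eq_conjTranspose] using hU.1
  have hV' : Vᴴ ∈ Matrix.unitaryGroup (Fin d) ℂ := by
    rw [Matrix.mem_unitaryGroup_iff]
    simpa [Matrix.star_eq_conjTranspose] using hV.1
  have := decompCosts_subset (fun X => U * N (V * X * Vᴴ) * Uᴴ) Uᴴ Vᴴ hU' hV'
  rwa [double_conj N U V hU hV] at this

end NuAux

/-- unitary channel invariance: `ν(𝒰 ∘ N ∘ 𝒱) = ν(N)` for unitary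
channels `𝒰(X) = U X U†` and `𝒱(X) = V X V†`. -/
theorem nu_unitary_invariance {d : ℕ}
    (N : Matrix (Fin d) (Fin d) ℂ → Matrix (Fin d) (Fin d) ℂ)
    (hlin : IsLinearMap ℂ N) (hHP : IsHP N) (hTP : IsTP N)
    (U V : Matrix (Fin d) (Fin d) ℂ)
    (hU : U ∈ Matrix.unitaryGroup (Fin d) ℂ)
    (hV : V ∈ Matrix.unitaryGroup (Fin d) ℂ) :
    nu (fun X => U * N (V * X * Vᴴ) * Uᴴ) = nu N := by
  unfold nu
  rw [NuAux.decompCosts_conj_eq N U V hU hV]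

end
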